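/- arXiv:2210.00685 — 2 statements merged into one kernel-verified Lean document; each statement's English description precedes it below -/
import Mathlib

section
/- Let y solve y' = M y + f(y), y(0) = y₀, with f twice continuously differentiable. The one-step error of the two-stage SVERK method given by Y₂ = exp((h/2)M) y₀ + (h/2) f(y₀) and y₁ = exp(hM) y₀ + h f(Y₂) + (h²/2) M f(y₀) satisfies y(h) − y₁ = O(h³) as h → 0. -/
open Matrix NormedSpace

private lemma taylor_step {E : Type*} [NormedAddCommGroup E] [NormedSpace ℝ E]
    {g g' : ℝ → E} (hg : ∀ t : ℝ, HasDerivAt g (g' t) t)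
    (hg0 : g 0 = 0) {B : ℝ} (hB : 0 ≤ B) {k : ℕ}
    (hbound : ∀ s ∈ Set.Icc (0:ℝ) 1, ‖g' s‖ ≤ B * s ^ k) :
    ∀ h ∈ Set.Icc (0:ℝ) 1, ‖g h‖ ≤ B * h ^ (k + 1) := by
  intro h hh
  have h0 : 0 ≤ h := hh.1
  have hsub : Set.Icc (0:ℝ) h ⊆ Set.Icc 0 1 := Set.Icc_subset_Icc le_rfl hh.2
  have mvt := Convex.norm_image_sub_le_of_norm_hasDerivWithin_le
    (f := g) (f' := g') (C := B * h ^ k) (s := Set.Icc 0 h)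
    (fun x hx => (hg x).hasDerivWithinAt)
    (fun x hx => le_trans (hbound x (hsub hx))
      (by
        have hp : x ^ k ≤ h ^ k := pow_le_pow_left₀ hx.1 hx.2 k
        nlinarith))
    (convex_Icc 0 h) (Set.left_mem_Icc.2 h0) (Set.right_mem_Icc.2 h0)
  rw [hg0, sub_zero, sub_zero, Real.norm_of_nonneg h0] at mvt
  calc ‖g h‖ ≤ B * h ^ k * h := mvt
    _ = B * h ^ (k + 1) := by rw [pow_succ]; ring

private lemma square_bound {E : Type*} [NormedAddCommGroup E] [NormedSpace ℝ E]
    {g g1 g2 : ℝ → E} (h1 : ∀ t : ℝ, HasDerivAt g (g1 t) t)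
    (h2 : ∀ t : ℝ, HasDerivAt g1 (g2 t) t) (h2c : Continuous g2)
    (h00 : g 0 = 0) (h10 : g1 0 = 0) :
    ∃ B : ℝ, 0 ≤ B ∧ ∀ h ∈ Set.Icc (0:ℝ) 1, ‖g h‖ ≤ B * h ^ 2 := by
  obtain ⟨B, hB⟩ := (isCompact_Icc (a := (0:ℝ)) (b := 1)).exists_bound_of_continuousOn
    h2c.continuousOn
  have hB0 : 0 ≤ max B 0 := le_max_right _ _
  refine ⟨max B 0, hB0, ?_⟩
  have s1 : ∀ h ∈ Set.Icc (0:ℝ) 1, ‖g1 h‖ ≤ max B 0 * h ^ 1 := by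
    have := taylor_step h2 h10 hB0 (k := 0)
      (fun s hs => by rw [pow_zero, mul_one]; exact le_trans (hB s hs) (le_max_left B 0))
    simpa using this
  exact taylor_step h1 h00 hB0 (k := 1) s1

private lemma cube_bound {E : Type*} [NormedAddCommGroup E] [NormedSpace ℝ E]
    {g g1 g2 g3 : ℝ → E} (h1 : ∀ t : ℝ, HasDerivAt g (g1 t) t)
    (h2 : ∀ t : ℝ, HasDerivAt g1 (g2 t) t)
    (h3 : ∀ t : ℝ, HasDerivAt g2 (g3 t) t) (h3c : Continuous g3)
    (h00 : g 0 = 0) (h10 : g1 0 = 0) (h20 : g2 0 = 0) :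
    ∃ B : ℝ, 0 ≤ B ∧ ∀ h ∈ Set.Icc (0:ℝ) 1, ‖g h‖ ≤ B * h ^ 3 := by
  obtain ⟨B, hB0, hB⟩ := square_bound h2 h3 h3c h10 h20
  exact ⟨B, hB0, taylor_step h1 h00 hB0 (k := 2) hB⟩

/-- One-step error of the two-stage SVERK method is `O(h³)`. -/
theorem SVERK2_local_error (d : ℕ) (M : Matrix (Fin d) (Fin d) ℝ)
    (f : (Fin d → ℝ) → (Fin d → ℝ)) (hf : ContDiff ℝ 2 f)
    (y₀ : Fin d → ℝ) (y : ℝ → Fin d → ℝ)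
    (hy : ∀ t : ℝ, HasDerivAt y (M.mulVec (y t) + f (y t)) t)
    (hy0 : y 0 = y₀) :
    ∃ C δ : ℝ, 0 < C ∧ 0 < δ ∧ ∀ h : ℝ, 0 < h → h < δ →
      ‖y h - ((NormedSpace.exp (h • M)).mulVec y₀ +
          h • f ((NormedSpace.exp ((h / 2) • M)).mulVec y₀ + (h / 2) • f y₀) +
          (h ^ 2 / 2) • M.mulVec (f y₀))‖ ≤ C * h ^ 3 := by
  letI : SeminormedRing (Matrix (Fin d) (Fin d) ℝ) := Matrix.linftyOpSemiNormedRing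
  letI : NormedRing (Matrix (Fin d) (Fin d) ℝ) := Matrix.linftyOpNormedRing
  letI : NormedAlgebra ℝ (Matrix (Fin d) (Fin d) ℝ) := Matrix.linftyOpNormedAlgebra
  -- basic regularity of f
  have hfd : Differentiable ℝ f := hf.differentiable two_ne_zero
  have hDf1 : ContDiff ℝ 1 (fderiv ℝ f) := hf.fderiv_right (by norm_num)
  have hDfd : Differentiable ℝ (fderiv ℝ f) := hDf1.differentiable one_ne_zero
  have hDfc : Continuous (fderiv ℝ f) := hDf1.continuous
  have hD2c : Continuous (fderiv ℝ (fderiv ℝ f)) := hDf1.continuous_fderiv one_ne_zero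
  -- `mulVec` by `M`, as a CLM on vectors
  set T : (Fin d → ℝ) →L[ℝ] (Fin d → ℝ) :=
    LinearMap.toContinuousLinearMap (Matrix.mulVecLin M) with hTdef
  have hT : ∀ v, T v = M.mulVec v := fun v => rfl
  -- derivative of `h ↦ (A * exp (h • N)).mulVec y₀`
  have key : ∀ (N A : Matrix (Fin d) (Fin d) ℝ) (t : ℝ),
      HasDerivAt (fun h : ℝ => ((A * NormedSpace.exp (h • N)).mulVec y₀))
        (((A * N) * NormedSpace.exp (t • N)).mulVec y₀) t := by
    intro N A t
    let LA : Matrix (Fin d) (Fin d) ℝ →ₗ[ℝ] (Fin d → ℝ) :=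
      { toFun := fun B => (A * B).mulVec y₀
        map_add' := fun B C => by simp [mul_add, Matrix.add_mulVec]
        map_smul' := fun a B => by simp [mul_smul_comm, Matrix.smul_mulVec] }
    have := (LinearMap.toContinuousLinearMap LA).hasFDerivAt.comp_hasDerivAt t
      (hasDerivAt_exp_smul_const' (𝕂 := ℝ) N t)
    rw [mul_assoc]; exact this
  have hexp0 : ∀ N : Matrix (Fin d) (Fin d) ℝ, NormedSpace.exp ((0:ℝ) • N) = 1 := fun N => by
    rw [zero_smul, exp_zero]
  -- the half matrix
  set M' : Matrix (Fin d) (Fin d) ℝ := (2⁻¹ : ℝ) • M with hM'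
  have hsmul : ∀ h : ℝ, h • M' = (h / 2) • M := by
    intro h; rw [hM', smul_smul, ← div_eq_mul_inv]
  -- chain of derivatives of y
  have hyd : Differentiable ℝ y := fun t => (hy t).differentiableAt
  have hyc : Continuous y := hyd.continuous
  set Y1 : ℝ → Fin d → ℝ := fun t => M.mulVec (y t) + f (y t) with hY1def
  set Y2 : ℝ → Fin d → ℝ := fun t => M.mulVec (Y1 t) + (fderiv ℝ f (y t)) (Y1 t) with hY2def
  set Y3 : ℝ → Fin d → ℝ := fun t =>
    M.mulVec (Y2 t) + ((fderiv ℝ (fderiv ℝ f) (y t)) (Y1 t) (Y1 t) + (fderiv ℝ f (y t)) (Y2 t))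
    with hY3def
  have hY1 : ∀ t, HasDerivAt y (Y1 t) t := by
    intro t; simp only [hY1def]; exact hy t
  have hcomp : ∀ t, HasDerivAt (fun s => f (y s)) ((fderiv ℝ f (y t)) (Y1 t)) t := by
    intro t
    have := (hfd (y t)).hasFDerivAt.comp_hasDerivAt t (hY1 t)
    simpa [Function.comp_def] using this
  have hMy : ∀ t, HasDerivAt (fun s => M.mulVec (y s)) (M.mulVec (Y1 t)) t := by
    intro t
    have := T.hasFDerivAt.comp_hasDerivAt t (hY1 t)
    simpa [Function.comp_def, hT] using this
  have hY2 : ∀ t, HasDerivAt Y1 (Y2 t) t := by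
    intro t
    simp only [hY1def, hY2def]
    exact (hMy t).add (hcomp t)
  have hY1c : Continuous Y1 :=
    continuous_iff_continuousAt.2 fun t => (hY2 t).continuousAt
  have hMY1 : ∀ t, HasDerivAt (fun s => M.mulVec (Y1 s)) (M.mulVec (Y2 t)) t := by
    intro t
    have := T.hasFDerivAt.comp_hasDerivAt t (hY2 t)
    simpa [Function.comp_def, hT] using this
  have hDfy : ∀ t, HasDerivAt (fun s => fderiv ℝ f (y s))
      ((fderiv ℝ (fderiv ℝ f) (y t)) (Y1 t)) t := by
    intro t
    have := (hDfd (y t)).hasFDerivAt.comp_hasDerivAt t (hY1 t)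
    simpa [Function.comp_def] using this
  have happ : ∀ t, HasDerivAt (fun s => (fderiv ℝ f (y s)) (Y1 s))
      ((fderiv ℝ (fderiv ℝ f) (y t)) (Y1 t) (Y1 t) + (fderiv ℝ f (y t)) (Y2 t)) t :=
    fun t => (hDfy t).clm_apply (hY2 t)
  have hY3 : ∀ t, HasDerivAt Y2 (Y3 t) t := by
    intro t
    simp only [hY2def, hY3def]
    exact (hMY1 t).add (happ t)
  have hY2c : Continuous Y2 :=
    continuous_iff_continuousAt.2 fun t => (hY3 t).continuousAt
  have hY3c : Continuous Y3 := by
    simp only [hY3def]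
    have c1 : Continuous (fun t => M.mulVec (Y2 t)) := T.continuous.comp hY2c
    have c2 : Continuous (fun t => (fderiv ℝ (fderiv ℝ f) (y t)) (Y1 t) (Y1 t)) :=
      ((hD2c.comp hyc).clm_apply hY1c).clm_apply hY1c
    have c3 : Continuous (fun t => (fderiv ℝ f (y t)) (Y2 t)) :=
      (hDfc.comp hyc).clm_apply hY2c
    exact c1.add (c2.add c3)
  -- chain of derivatives of the flow part
  have hΦ : ∀ t : ℝ, HasDerivAt (fun h : ℝ => (NormedSpace.exp (h • M)).mulVec y₀)
      ((M * NormedSpace.exp (t • M)).mulVec y₀) t := by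
    intro t; have := key M 1 t; simpa [one_mul] using this
  have hΦ1 : ∀ t : ℝ, HasDerivAt (fun h : ℝ => (M * NormedSpace.exp (h • M)).mulVec y₀)
      ((M * M * NormedSpace.exp (t • M)).mulVec y₀) t := fun t => key M M t
  have hΦ2 : ∀ t : ℝ, HasDerivAt (fun h : ℝ => (M * M * NormedSpace.exp (h • M)).mulVec y₀)
      ((M * M * M * NormedSpace.exp (t • M)).mulVec y₀) t := fun t => key M (M * M) t
  have hΦ3c : Continuous (fun h : ℝ => (M * M * M * NormedSpace.exp (h • M)).mulVec y₀) :=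
    continuous_iff_continuousAt.2 fun t => (key M (M * M * M) t).continuousAt
  -- the internal stage and its derivatives
  set Z : ℝ → Fin d → ℝ := fun h => (NormedSpace.exp ((h / 2) • M)).mulVec y₀ + (h / 2) • f y₀ with hZdef
  set Zd : ℝ → Fin d → ℝ := fun h => (M' * NormedSpace.exp (h • M')).mulVec y₀ + (2⁻¹ : ℝ) • f y₀
    with hZddef
  set Zdd : ℝ → Fin d → ℝ := fun h => (M' * M' * NormedSpace.exp (h • M')).mulVec y₀ with hZdddef
  have hZ : ∀ t, HasDerivAt Z (Zd t) t := by
    intro t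
    have h1 : HasDerivAt (fun h : ℝ => (NormedSpace.exp (h • M')).mulVec y₀)
        ((M' * NormedSpace.exp (t • M')).mulVec y₀) t := by
      have := key M' 1 t; simpa [one_mul] using this
    have h1' : HasDerivAt (fun h : ℝ => (NormedSpace.exp ((h / 2) • M)).mulVec y₀)
        ((M' * NormedSpace.exp (t • M')).mulVec y₀) t := by
      simpa only [hsmul] using h1
    have h2 : HasDerivAt (fun h : ℝ => (h / 2) • f y₀) ((2⁻¹ : ℝ) • f y₀) t := by
      have := ((hasDerivAt_id t).div_const 2).smul_const (f y₀)
      simpa [one_div] using this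
    simp only [hZdef, hZddef]
    exact h1'.add h2
  have hZd : ∀ t, HasDerivAt Zd (Zdd t) t := by
    intro t
    simp only [hZddef, hZdddef]
    exact (key M' M' t).add_const _
  have hZc : Continuous Z := continuous_iff_continuousAt.2 fun t => (hZ t).continuousAt
  have hZdc : Continuous Zd := continuous_iff_continuousAt.2 fun t => (hZd t).continuousAt
  have hZddc : Continuous Zdd := by
    simp only [hZdddef]
    exact continuous_iff_continuousAt.2 fun t => (key M' (M' * M') t).continuousAt
  -- G and its derivatives
  set G : ℝ → Fin d → ℝ := fun h => f (Z h) with hGdef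
  set G1 : ℝ → Fin d → ℝ := fun h => (fderiv ℝ f (Z h)) (Zd h) with hG1def
  set G2 : ℝ → Fin d → ℝ := fun h =>
    (fderiv ℝ (fderiv ℝ f) (Z h)) (Zd h) (Zd h) + (fderiv ℝ f (Z h)) (Zdd h) with hG2def
  have hG : ∀ t, HasDerivAt G (G1 t) t := by
    intro t
    have := (hfd (Z t)).hasFDerivAt.comp_hasDerivAt t (hZ t)
    simp only [hGdef, hG1def]
    simpa [Function.comp_def] using this
  have hG1 : ∀ t, HasDerivAt G1 (G2 t) t := by
    intro t
    have hc : HasDerivAt (fun s => fderiv ℝ f (Z s))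
        ((fderiv ℝ (fderiv ℝ f) (Z t)) (Zd t)) t := by
      have := (hDfd (Z t)).hasFDerivAt.comp_hasDerivAt t (hZ t)
      simpa [Function.comp_def] using this
    simp only [hG1def, hG2def]
    exact hc.clm_apply (hZd t)
  have hG2c : Continuous G2 := by
    simp only [hG2def]
    exact (((hD2c.comp hZc).clm_apply hZdc).clm_apply hZdc).add
      ((hDfc.comp hZc).clm_apply hZddc)
  -- values at 0
  have hZ0 : Z 0 = y₀ := by
    simp [hZdef, zero_div, hexp0, Matrix.one_mulVec]
  have hZd0 : Zd 0 = (2⁻¹ : ℝ) • (M.mulVec y₀ + f y₀) := by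
    simp only [hZddef]
    rw [hexp0, mul_one, hM', Matrix.smul_mulVec, smul_add]
  set g₀ : Fin d → ℝ := (fderiv ℝ f y₀) ((2⁻¹ : ℝ) • (M.mulVec y₀ + f y₀)) with hg₀def
  have hG0 : G 0 = f y₀ := by simp only [hGdef]; rw [hZ0]
  have hG10 : G1 0 = g₀ := by simp only [hG1def, hg₀def]; rw [hZ0, hZd0]
  -- remainder of the internal stage
  set R : ℝ → Fin d → ℝ := fun h => G h - f y₀ - h • g₀ with hRdef
  have hR : ∀ t, HasDerivAt R (G1 t - g₀) t := by
    intro t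
    have h2 : HasDerivAt (fun h : ℝ => h • g₀) g₀ t := by
      simpa using (hasDerivAt_id t).smul_const g₀
    simp only [hRdef]
    exact ((hG t).sub_const (f y₀)).sub h2
  have hR0 : R 0 = 0 := by simp [hRdef, hG0]
  obtain ⟨B2, hB2nn, hB2⟩ := square_bound hR (fun t => (hG1 t).sub_const g₀) hG2c hR0
    (by show G1 0 - g₀ = 0; rw [hG10, sub_self])
  -- the main error term
  set A : ℝ → Fin d → ℝ := fun h => y h - (NormedSpace.exp (h • M)).mulVec y₀
      - (h ^ 2 / 2) • M.mulVec (f y₀) - h • f y₀ - (h ^ 2) • g₀ with hAdef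
  set A1 : ℝ → Fin d → ℝ := fun h => Y1 h - (M * NormedSpace.exp (h • M)).mulVec y₀
      - h • M.mulVec (f y₀) - f y₀ - (2 * h) • g₀ with hA1def
  set A2 : ℝ → Fin d → ℝ := fun h => Y2 h - (M * M * NormedSpace.exp (h • M)).mulVec y₀
      - M.mulVec (f y₀) - (2 : ℝ) • g₀ with hA2def
  set A3 : ℝ → Fin d → ℝ := fun h => Y3 h - (M * M * M * NormedSpace.exp (h • M)).mulVec y₀ with hA3def
  have hA : ∀ t, HasDerivAt A (A1 t) t := by
    intro t
    have p1 : HasDerivAt (fun h : ℝ => (h ^ 2 / 2) • M.mulVec (f y₀)) (t • M.mulVec (f y₀)) t := by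
      have hq : HasDerivAt (fun h : ℝ => h ^ 2 / 2) t t := by
        have := (hasDerivAt_pow 2 t).div_const 2
        norm_num at this
        exact this
      exact hq.smul_const _
    have p2 : HasDerivAt (fun h : ℝ => h • f y₀) (f y₀) t := by
      simpa using (hasDerivAt_id t).smul_const (f y₀)
    have p3 : HasDerivAt (fun h : ℝ => (h ^ 2) • g₀) ((2 * t) • g₀) t := by
      have := (hasDerivAt_pow 2 t).smul_const g₀
      simpa [pow_one] using this
    simp only [hAdef, hA1def]
    exact ((((hY1 t).sub (hΦ t)).sub p1).sub p2).sub p3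
  have hA1 : ∀ t, HasDerivAt A1 (A2 t) t := by
    intro t
    have p1 : HasDerivAt (fun h : ℝ => h • M.mulVec (f y₀)) (M.mulVec (f y₀)) t := by
      simpa using (hasDerivAt_id t).smul_const (M.mulVec (f y₀))
    have p3 : HasDerivAt (fun h : ℝ => (2 * h) • g₀) ((2 : ℝ) • g₀) t := by
      have := ((hasDerivAt_id t).const_mul 2).smul_const g₀
      simpa using this
    simp only [hA1def, hA2def]
    exact ((((hY2 t).sub (hΦ1 t)).sub p1).sub_const (f y₀)).sub p3
  have hA2 : ∀ t, HasDerivAt A2 (A3 t) t := by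
    intro t
    simp only [hA2def, hA3def]
    exact (((hY3 t).sub (hΦ2 t)).sub_const _).sub_const _
  have hA3c : Continuous A3 := by
    simp only [hA3def]; exact hY3c.sub hΦ3c
  -- values at 0
  have hA0 : A 0 = 0 := by
    simp only [hAdef]
    rw [hexp0, Matrix.one_mulVec, hy0]
    norm_num
  have hA10 : A1 0 = 0 := by
    simp only [hA1def, hY1def]
    rw [hexp0, mul_one, hy0]
    norm_num
  have hA20 : A2 0 = 0 := by
    have h2g : (2 : ℝ) • g₀ = (fderiv ℝ f y₀) (M.mulVec y₀ + f y₀) := by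
      rw [hg₀def, ← ContinuousLinearMap.map_smul, smul_smul]
      norm_num
    simp only [hA2def, hY2def, hY1def]
    rw [hexp0, mul_one, hy0, h2g, ← Matrix.mulVec_mulVec, Matrix.mulVec_add]
    abel
  obtain ⟨B1, hB1nn, hB1⟩ := cube_bound hA hA1 hA2 hA3c hA0 hA10 hA20
  -- conclusion
  refine ⟨B1 + B2 + 1, 1, by positivity, one_pos, ?_⟩
  intro h hpos hlt
  have hmem : h ∈ Set.Icc (0:ℝ) 1 := ⟨hpos.le, hlt.le⟩
  have hid : y h - ((NormedSpace.exp (h • M)).mulVec y₀ +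
      h • f ((NormedSpace.exp ((h / 2) • M)).mulVec y₀ + (h / 2) • f y₀) +
      (h ^ 2 / 2) • M.mulVec (f y₀)) = A h - h • R h := by
    simp only [hAdef, hRdef, hGdef, hZdef]
    module
  rw [hid]
  calc ‖A h - h • R h‖ ≤ ‖A h‖ + ‖h • R h‖ := norm_sub_le _ _
    _ = ‖A h‖ + |h| * ‖R h‖ := by rw [norm_smul, Real.norm_eq_abs]
    _ ≤ B1 * h ^ 3 + h * (B2 * h ^ 2) := by
        rw [abs_of_pos hpos]
        exact add_le_add (hB1 h hmem) (mul_le_mul_of_nonneg_left (hB2 h hmem) hpos.le)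
    _ ≤ (B1 + B2 + 1) * h ^ 3 := by nlinarith [pow_pos hpos 3]
end

section
/- For the exact solution y of y' = M y + f(y) with f continuously differentiable, the local defect of the modified exponential Euler method admits the representation δ = h(φ₁(hM) − I) f(y(t₀)) + ∫₀ʰ exp((h−τ)M) ∫₀^τ (d/dσ) f(y(t₀+σ)) dσ dτ, where δ = y(t₀+h) − exp(hM) y(t₀) − h f(y(t₀)). -/
set_option maxHeartbeats 1000000


open Matrix NormedSpace intervalIntegral MeasureTheory

section Aux

variable {d : ℕ}

attribute [local instance] Matrix.linftyOpNormedAddCommGroup Matrix.linftyOpNormedRing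
  Matrix.linftyOpNormedAlgebra

noncomputable def auxMatCENorm (d : ℕ) : ContinuousENorm (Matrix (Fin d) (Fin d) ℝ) :=
  SeminormedAddGroup.toContinuousENorm

noncomputable def auxMatENAM (d : ℕ) : ENormedAddMonoid (Matrix (Fin d) (Fin d) ℝ) :=
  NormedAddGroup.toENormedAddMonoid

attribute [local instance] auxMatCENorm auxMatENAM

/-- `mulVec` as a continuous bilinear map. -/
noncomputable def mulVecCLM (d : ℕ) :
    Matrix (Fin d) (Fin d) ℝ →L[ℝ] (Fin d → ℝ) →L[ℝ] (Fin d → ℝ) :=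
  LinearMap.toContinuousLinearMap
    ((LinearMap.toContinuousLinearMap : ((Fin d → ℝ) →ₗ[ℝ] (Fin d → ℝ)) ≃ₗ[ℝ] _).toLinearMap ∘ₗ
      (Matrix.toLin' : Matrix (Fin d) (Fin d) ℝ ≃ₗ[ℝ] _).toLinearMap)

lemma mulVecCLM_apply (A : Matrix (Fin d) (Fin d) ℝ) (v : Fin d → ℝ) :
    mulVecCLM d A v = A.mulVec v := rfl

lemma hasDerivAt_expE (M : Matrix (Fin d) (Fin d) ℝ) (c t : ℝ) :
    HasDerivAt (fun u : ℝ => exp ((c - u) • M)) (-(M * exp ((c - t) • M))) t := by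
  have h1 := hasDerivAt_exp_smul_const' (𝕂 := ℝ) M (c - t)
  have h2 : HasDerivAt (fun u : ℝ => c - u) (-1 : ℝ) t := (hasDerivAt_id t).const_sub c
  have h3 := h1.scomp t h2
  simp only [Function.comp_def, neg_smul, one_smul] at h3
  exact h3

lemma integral_exp_hasSum (M : Matrix (Fin d) (Fin d) ℝ) (h : ℝ) (hh : 0 < h) :
    HasSum (fun k : ℕ => h • (((k + 1).factorial : ℝ)⁻¹ • (h • M) ^ k))
      (∫ s in (0:ℝ)..h, exp (s • M)) := by
  set F : ℕ → ℝ → Matrix (Fin d) (Fin d) ℝ := fun k s => ((k.factorial : ℝ)⁻¹ * s ^ k) • M ^ k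
    with hFdef
  have hFcont : ∀ k, Continuous (F k) := fun k =>
    (continuous_const.mul (continuous_pow k)).smul continuous_const
  have hFint : ∀ k, Integrable (F k) (volume.restrict (Set.Ioc 0 h)) := fun k =>
    (hFcont k).integrableOn_Ioc
  set K : ℝ := max 1 ‖(1 : Matrix (Fin d) (Fin d) ℝ)‖ with hK
  have hK1 : (1:ℝ) ≤ K := le_max_left _ _
  have hMk : ∀ k : ℕ, ‖M ^ k‖ ≤ K * ‖M‖ ^ k := by
    intro k
    cases k with
    | zero =>
      rw [pow_zero, pow_zero, mul_one]
      exact le_max_right _ _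
    | succ n =>
      calc ‖M ^ (n+1)‖ ≤ ‖M‖ ^ (n+1) := norm_pow_le' M n.succ_pos
        _ ≤ K * ‖M‖ ^ (n+1) := le_mul_of_one_le_left (by positivity) hK1
  have hnormval : ∀ k, ∫ s in Set.Ioc 0 h, ‖F k s‖ =
      ((k.factorial : ℝ)⁻¹ * (h ^ (k+1) / (k+1))) * ‖M ^ k‖ := by
    intro k
    rw [← intervalIntegral.integral_of_le hh.le]
    have : ∀ s ∈ Set.uIcc (0:ℝ) h, ‖F k s‖ = ((k.factorial : ℝ)⁻¹ * s ^ k) * ‖M ^ k‖ := by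
      intro s hs
      rw [Set.uIcc_of_le hh.le] at hs
      rw [hFdef]
      simp only [norm_smul, Real.norm_eq_abs]
      rw [abs_of_nonneg (mul_nonneg (by positivity) (pow_nonneg hs.1 k))]
    rw [intervalIntegral.integral_congr this]
    rw [intervalIntegral.integral_mul_const, intervalIntegral.integral_const_mul,
      integral_pow]
    ring
  have hsum_norm : Summable fun k => ∫ s in Set.Ioc 0 h, ‖F k s‖ := by
    refine Summable.of_nonneg_of_le
      (fun k => integral_nonneg fun s => norm_nonneg _)
      (fun k => ?_)
      (((Real.summable_pow_div_factorial (h * ‖M‖)).mul_left (K * h)))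
    rw [hnormval k]
    have h1 : ((k.factorial : ℝ))⁻¹ * (h ^ (k+1) / (k+1)) * ‖M ^ k‖ ≤
        ((k.factorial : ℝ))⁻¹ * h ^ (k+1) * (K * ‖M‖ ^ k) := by
      have e1 : h ^ (k+1) / (k+1 : ℝ) ≤ h ^ (k+1) := by
        apply div_le_self (by positivity)
        exact_mod_cast Nat.one_le_iff_ne_zero.2 (Nat.succ_ne_zero k)
      have hMknn : (0:ℝ) ≤ ‖M ^ k‖ := norm_nonneg _
      calc ((k.factorial : ℝ))⁻¹ * (h ^ (k+1) / (k+1)) * ‖M ^ k‖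
          ≤ ((k.factorial : ℝ))⁻¹ * h ^ (k+1) * ‖M ^ k‖ := by
            apply mul_le_mul_of_nonneg_right _ hMknn
            exact mul_le_mul_of_nonneg_left e1 (by positivity)
        _ ≤ ((k.factorial : ℝ))⁻¹ * h ^ (k+1) * (K * ‖M‖ ^ k) := by
            apply mul_le_mul_of_nonneg_left (hMk k) (by positivity)
    refine h1.trans (le_of_eq ?_)
    rw [mul_pow, pow_succ]
    field_simp
  have hHS := MeasureTheory.hasSum_integral_of_summable_integral_norm hFint hsum_norm
  have htsum : ∀ s : ℝ, (∑' k, F k s) = exp (s • M) := by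
    intro s
    rw [exp_eq_tsum ℝ]
    congr 1
    funext k
    rw [hFdef]
    simp only [smul_pow, smul_smul]
  have hexp_int : ∫ s in Set.Ioc 0 h, exp (s • M) = ∫ s in (0:ℝ)..h, exp (s • M) :=
    (intervalIntegral.integral_of_le hh.le).symm
  have hFk_int : ∀ k, ∫ s in Set.Ioc 0 h, F k s =
      h • (((k + 1).factorial : ℝ)⁻¹ • (h • M) ^ k) := by
    intro k
    rw [← intervalIntegral.integral_of_le hh.le, hFdef]
    simp only
    rw [intervalIntegral.integral_smul_const, intervalIntegral.integral_const_mul, integral_pow]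
    rw [smul_pow, smul_smul, smul_smul]
    congr 1
    rw [Nat.factorial_succ]
    push_cast
    have : ((k.factorial : ℝ)) ≠ 0 := Nat.cast_ne_zero.2 k.factorial_ne_zero
    field_simp
    ring
  simp only [hFk_int] at hHS
  have e : (∫ s in Set.Ioc 0 h, ∑' k, F k s) = ∫ s in (0:ℝ)..h, exp (s • M) := by
    rw [← hexp_int]; exact setIntegral_congr_fun measurableSet_Ioc fun s _ => htsum s
  exact (congrArg (fun x => HasSum (fun k : ℕ => h • (((k + 1).factorial : ℝ)⁻¹ • (h • M) ^ k)) x)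
    e).mp hHS

lemma aux_hasDerivAt_G (M : Matrix (Fin d) (Fin d) ℝ) (f : (Fin d → ℝ) → (Fin d → ℝ))
    (y : ℝ → Fin d → ℝ) (c t : ℝ)
    (hyt : HasDerivAt y (M.mulVec (y t) + f (y t)) t) :
    HasDerivAt (fun u => (exp ((c - u) • M)).mulVec (y u))
      ((exp ((c - t) • M)).mulVec (f (y t))) t := by
  have hE := hasDerivAt_expE M c t
  have hEc : HasDerivAt (fun u => mulVecCLM d (exp ((c - u) • M)))
      (mulVecCLM d (-(M * exp ((c - t) • M)))) t :=
    (mulVecCLM d).hasFDerivAt.comp_hasDerivAt t hE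
  have hder := hEc.clm_apply hyt
  have h2 : (mulVecCLM d (-(M * exp ((c - t) • M)))) (y t) +
      (mulVecCLM d (exp ((c - t) • M))) (M.mulVec (y t) + f (y t)) =
      (exp ((c - t) • M)).mulVec (f (y t)) := by
    have hcomm : M * exp ((c - t) • M) = exp ((c - t) • M) * M :=
      (Commute.exp_right ((Commute.refl M).smul_right _)).eq
    simp only [mulVecCLM_apply, hcomm, Matrix.neg_mulVec, Matrix.mulVec_add,
      ← Matrix.mulVec_mulVec]
    abel
  rw [← h2]
  exact hder

lemma aux_cont_mulVec :
    Continuous fun p : Matrix (Fin d) (Fin d) ℝ × (Fin d → ℝ) => p.1.mulVec p.2 :=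
  (mulVecCLM d).isBoundedBilinearMap.continuous

lemma aux_cont_exp (M : Matrix (Fin d) (Fin d) ℝ) (c : ℝ) :
    Continuous fun u : ℝ => exp ((c - u) • M) :=
  continuous_iff_continuousAt.2 fun t => (hasDerivAt_expE M c t).continuousAt

lemma aux_term1 (M : Matrix (Fin d) (Fin d) ℝ) (c : Fin d → ℝ) (h : ℝ) (hh : 0 < h) :
    (∫ τ in (0:ℝ)..h, (exp ((h - τ) • M)).mulVec c) =
      (h • ∑' k : ℕ, (((k + 1).factorial : ℝ))⁻¹ • (h • M) ^ k).mulVec c := by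
  have hcont : Continuous fun τ : ℝ => exp ((h - τ) • M) := aux_cont_exp M h
  have hInt : IntervalIntegrable (fun τ : ℝ => exp ((h - τ) • M)) volume 0 h :=
    hcont.intervalIntegrable 0 h
  have step0 : (fun τ : ℝ => (exp ((h - τ) • M)).mulVec c) =
      fun τ : ℝ => ((mulVecCLM d).flip c) (exp ((h - τ) • M)) := by
    funext τ
    rfl
  have step1 : (∫ τ in (0:ℝ)..h, (exp ((h - τ) • M)).mulVec c) =
      ((mulVecCLM d).flip c) (∫ τ in (0:ℝ)..h, exp ((h - τ) • M)) := by
    rw [show (∫ τ in (0:ℝ)..h, (exp ((h - τ) • M)).mulVec c) =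
        ∫ τ in (0:ℝ)..h, ((mulVecCLM d).flip c) (exp ((h - τ) • M)) by rw [step0]]
    exact ContinuousLinearMap.intervalIntegral_comp_comm ((mulVecCLM d).flip c) hInt
  have step2 : (∫ τ in (0:ℝ)..h, exp ((h - τ) • M)) = ∫ s in (0:ℝ)..h, exp (s • M) := by
    have := intervalIntegral.integral_comp_sub_left (a := (0:ℝ)) (b := h)
      (fun s => exp (s • M)) h
    simpa using this
  have hHS := integral_exp_hasSum M h hh
  have hS : HasSum (fun k : ℕ => (((k + 1).factorial : ℝ))⁻¹ • (h • M) ^ k)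
      (h⁻¹ • ∫ s in (0:ℝ)..h, exp (s • M)) := by
    have := hHS.const_smul h⁻¹
    simpa [smul_smul, ← mul_assoc, inv_mul_cancel₀ hh.ne'] using this
  have step3 : (∫ s in (0:ℝ)..h, exp (s • M)) =
      h • ∑' k : ℕ, (((k + 1).factorial : ℝ))⁻¹ • (h • M) ^ k := by
    rw [hS.tsum_eq, smul_smul, mul_inv_cancel₀ hh.ne', one_smul]
  rw [step1, step2, step3]
  rfl

end Aux

/-- Representation of the local defect of the modified exponential Euler method. -/
theorem MVERK1_defect_representation (d : ℕ) (M : Matrix (Fin d) (Fin d) ℝ)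
    (f : (Fin d → ℝ) → (Fin d → ℝ)) (hf : ContDiff ℝ 1 f)
    (y : ℝ → Fin d → ℝ) (t₀ h : ℝ) (hh : 0 < h)
    (hy : ∀ t ∈ Set.Icc t₀ (t₀ + h), HasDerivAt y (M.mulVec (y t) + f (y t)) t) :
    y (t₀ + h) - (exp (h • M)).mulVec (y t₀) - h • f (y t₀) =
      h • ((∑' k : ℕ, (((k + 1).factorial : ℝ))⁻¹ • (h • M) ^ k) -
            (1 : Matrix (Fin d) (Fin d) ℝ)).mulVec (f (y t₀)) +
        ∫ τ in (0:ℝ)..h, (exp ((h - τ) • M)).mulVec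
          (∫ σ in (0:ℝ)..τ, deriv (fun s : ℝ => f (y (t₀ + s))) σ) := by
  have ht₀T : t₀ ≤ t₀ + h := le_add_of_nonneg_right hh.le
  have huIcc : Set.uIcc t₀ (t₀ + h) = Set.Icc t₀ (t₀ + h) := Set.uIcc_of_le ht₀T
  -- continuity facts
  have hycont : ContinuousOn y (Set.Icc t₀ (t₀ + h)) :=
    fun t ht => (hy t ht).continuousAt.continuousWithinAt
  have hfc : Continuous f := hf.continuous
  -- variation of constants
  have key1 : (∫ t in t₀..(t₀ + h), (exp ((t₀ + h - t) • M)).mulVec (f (y t))) =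
      y (t₀ + h) - (exp (h • M)).mulVec (y t₀) := by
    have hderiv : ∀ t ∈ Set.uIcc t₀ (t₀ + h),
        HasDerivAt (fun u => (exp ((t₀ + h - u) • M)).mulVec (y u))
          ((exp ((t₀ + h - t) • M)).mulVec (f (y t))) t := by
      intro t ht
      rw [huIcc] at ht
      exact aux_hasDerivAt_G M f y (t₀ + h) t (hy t ht)
    have hint : IntervalIntegrable
        (fun t => (exp ((t₀ + h - t) • M)).mulVec (f (y t))) volume t₀ (t₀ + h) := by
      apply ContinuousOn.intervalIntegrable
      rw [huIcc]
      have c1 : ContinuousOn (fun t : ℝ => exp ((t₀ + h - t) • M)) (Set.Icc t₀ (t₀ + h)) :=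
        (aux_cont_exp M (t₀ + h)).continuousOn
      have c2 : ContinuousOn (fun t => f (y t)) (Set.Icc t₀ (t₀ + h)) :=
        hfc.comp_continuousOn hycont
      exact aux_cont_mulVec.comp_continuousOn (c1.prodMk c2)
    have := intervalIntegral.integral_eq_sub_of_hasDerivAt hderiv hint
    rw [this]
    have e1 : t₀ + h - (t₀ + h) = (0:ℝ) := by ring
    have e2 : t₀ + h - t₀ = h := by ring
    rw [e1, e2, zero_smul, exp_zero, Matrix.one_mulVec]
  -- change of variables
  have key2 : (∫ τ in (0:ℝ)..h, (exp ((h - τ) • M)).mulVec (f (y (t₀ + τ)))) =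
      ∫ t in t₀..(t₀ + h), (exp ((t₀ + h - t) • M)).mulVec (f (y t)) := by
    have := intervalIntegral.integral_comp_add_left (a := (0:ℝ)) (b := h)
      (fun t => (exp ((t₀ + h - t) • M)).mulVec (f (y t))) t₀
    rw [add_zero] at this
    rw [← this]
    apply intervalIntegral.integral_congr
    intro τ _
    show exp ((h - τ) • M) *ᵥ f (y (t₀ + τ)) = exp ((t₀ + h - (t₀ + τ)) • M) *ᵥ f (y (t₀ + τ))
    have e : t₀ + h - (t₀ + τ) = h - τ := by ring
    rw [e]
  -- the derivative of τ ↦ f (y (t₀ + τ))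
  set w : ℝ → Fin d → ℝ := fun σ => deriv (fun s : ℝ => f (y (t₀ + s))) σ with hw
  set D : ℝ → Fin d → ℝ := fun σ =>
    (fderiv ℝ f (y (t₀ + σ))) (M.mulVec (y (t₀ + σ)) + f (y (t₀ + σ))) with hD
  have hshift : ∀ σ ∈ Set.Icc (0:ℝ) h, t₀ + σ ∈ Set.Icc t₀ (t₀ + h) := by
    intro σ hσ
    exact ⟨le_add_of_nonneg_right hσ.1, by simpa using hσ.2⟩
  have hFd : ∀ σ ∈ Set.Icc (0:ℝ) h,
      HasDerivAt (fun s : ℝ => f (y (t₀ + s))) (D σ) σ := by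
    intro σ hσ
    have h1 : HasDerivAt (fun s : ℝ => y (t₀ + s))
        (M.mulVec (y (t₀ + σ)) + f (y (t₀ + σ))) σ := by
      have := (hy (t₀ + σ) (hshift σ hσ)).scomp σ ((hasDerivAt_id σ).const_add t₀)
      simpa [Function.comp_def] using this
    exact ((hf.differentiable one_ne_zero (y (t₀ + σ))).hasFDerivAt).comp_hasDerivAt σ h1
  have hwD : ∀ σ ∈ Set.Icc (0:ℝ) h, w σ = D σ := fun σ hσ => (hFd σ hσ).deriv
  have hDcont : ContinuousOn D (Set.Icc (0:ℝ) h) := by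
    have hyc : ContinuousOn (fun σ : ℝ => y (t₀ + σ)) (Set.Icc (0:ℝ) h) :=
      hycont.comp (continuous_const.add continuous_id).continuousOn hshift
    have hc1 : ContinuousOn (fun σ : ℝ => fderiv ℝ f (y (t₀ + σ))) (Set.Icc (0:ℝ) h) :=
      (hf.continuous_fderiv one_ne_zero).comp_continuousOn hyc
    have hc2 : ContinuousOn (fun σ : ℝ => M.mulVec (y (t₀ + σ)) + f (y (t₀ + σ)))
        (Set.Icc (0:ℝ) h) := by
      have : ContinuousOn (fun σ : ℝ => M.mulVec (y (t₀ + σ))) (Set.Icc (0:ℝ) h) :=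
        aux_cont_mulVec.comp_continuousOn (continuousOn_const.prodMk hyc)
      exact this.add (hfc.comp_continuousOn hyc)
    exact hc1.clm_apply hc2
  have hwcont : ContinuousOn w (Set.Icc (0:ℝ) h) := hDcont.congr hwD
  -- FTC for the inner integral
  have hFtc : ∀ τ ∈ Set.Icc (0:ℝ) h,
      (∫ σ in (0:ℝ)..τ, w σ) = f (y (t₀ + τ)) - f (y t₀) := by
    intro τ hτ
    have hsub : Set.uIcc (0:ℝ) τ ⊆ Set.Icc (0:ℝ) h := by
      rw [Set.uIcc_of_le hτ.1]
      exact Set.Icc_subset_Icc le_rfl hτ.2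
    have hderiv : ∀ σ ∈ Set.uIcc (0:ℝ) τ,
        HasDerivAt (fun s : ℝ => f (y (t₀ + s))) (w σ) σ := by
      intro σ hσ
      rw [hwD σ (hsub hσ)]
      exact hFd σ (hsub hσ)
    have hint : IntervalIntegrable w volume 0 τ :=
      (hwcont.mono hsub).intervalIntegrable
    have := intervalIntegral.integral_eq_sub_of_hasDerivAt hderiv hint
    rw [this, add_zero]
  -- split the integral
  have huIcc0h : Set.uIcc (0:ℝ) h = Set.Icc (0:ℝ) h := Set.uIcc_of_le hh.le
  have hsplit : ∀ τ ∈ Set.uIcc (0:ℝ) h,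
      (exp ((h - τ) • M)).mulVec (f (y (t₀ + τ))) =
        (exp ((h - τ) • M)).mulVec (f (y t₀)) +
          (exp ((h - τ) • M)).mulVec (∫ σ in (0:ℝ)..τ, w σ) := by
    intro τ hτ
    rw [huIcc0h] at hτ
    have e : f (y (t₀ + τ)) = f (y t₀) + (f (y (t₀ + τ)) - f (y t₀)) := by abel
    rw [hFtc τ hτ, ← Matrix.mulVec_add, ← e]
  have hcontE : ∀ c : Fin d → ℝ,
      Continuous fun τ : ℝ => (exp ((h - τ) • M)).mulVec c := by
    intro c
    exact aux_cont_mulVec.comp ((aux_cont_exp M h).prodMk continuous_const)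
  have hInt1 : IntervalIntegrable
      (fun τ : ℝ => (exp ((h - τ) • M)).mulVec (f (y t₀))) volume 0 h :=
    (hcontE (f (y t₀))).intervalIntegrable 0 h
  have hInt2 : IntervalIntegrable
      (fun τ : ℝ => (exp ((h - τ) • M)).mulVec (∫ σ in (0:ℝ)..τ, w σ)) volume 0 h := by
    apply ContinuousOn.intervalIntegrable
    rw [huIcc0h]
    have hc : ContinuousOn (fun τ : ℝ =>
        (exp ((h - τ) • M)).mulVec (f (y (t₀ + τ)) - f (y t₀))) (Set.Icc (0:ℝ) h) := by
      have hyc : ContinuousOn (fun σ : ℝ => y (t₀ + σ)) (Set.Icc (0:ℝ) h) :=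
        hycont.comp (continuous_const.add continuous_id).continuousOn hshift
      have : ContinuousOn (fun τ : ℝ => f (y (t₀ + τ)) - f (y t₀)) (Set.Icc (0:ℝ) h) :=
        (hfc.comp_continuousOn hyc).sub continuousOn_const
      exact aux_cont_mulVec.comp_continuousOn ((aux_cont_exp M h).continuousOn.prodMk this)
    apply hc.congr
    intro τ hτ
    show (exp ((h - τ) • M)).mulVec (∫ σ in (0:ℝ)..τ, w σ) =
      (exp ((h - τ) • M)).mulVec (f (y (t₀ + τ)) - f (y t₀))
    rw [hFtc τ hτ]
  have hsplit2 : (∫ τ in (0:ℝ)..h, (exp ((h - τ) • M)).mulVec (f (y (t₀ + τ)))) =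
      (∫ τ in (0:ℝ)..h, (exp ((h - τ) • M)).mulVec (f (y t₀))) +
        ∫ τ in (0:ℝ)..h, (exp ((h - τ) • M)).mulVec (∫ σ in (0:ℝ)..τ, w σ) := by
    rw [intervalIntegral.integral_congr hsplit]
    exact intervalIntegral.integral_add hInt1 hInt2
  -- assemble
  have total : y (t₀ + h) - (exp (h • M)).mulVec (y t₀) =
      (h • ∑' k : ℕ, (((k + 1).factorial : ℝ))⁻¹ • (h • M) ^ k).mulVec (f (y t₀)) +
        ∫ τ in (0:ℝ)..h, (exp ((h - τ) • M)).mulVec (∫ σ in (0:ℝ)..τ, w σ) := by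
    rw [← key1, ← key2, hsplit2, aux_term1 M (f (y t₀)) h hh]
  rw [total, Matrix.sub_mulVec, Matrix.one_mulVec, smul_sub, ← Matrix.smul_mulVec]
  abel
end
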